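/- For $A_2 = \mathfrak{sl}_3$ and any dominant integral weight $\lambda$, the sum of formal exponentials of the distinct weights of $L(\lambda)$ equals $\operatorname{ch}_\lambda - \operatorname{ch}_{\lambda - \alpha_1 - \alpha_2}$, where for $\lambda - \alpha_1 - \alpha_2$ not dominant, the character is interpreted via the shifted Weyl group action: $\operatorname{ch}_{w\cdot\mu} := (-1)^{\ell(w)}\operatorname{ch}_\mu$ for $\mu$ dominant, and $\operatorname{ch}_\nu := 0$ if $\nu + \rho$ lies on a wall. -/

import Mathlib

/-- The group algebra (over `ℤ`) of the weight lattice of `A₂ = 𝔰𝔩₃`, weights in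
fundamental-weight coordinates. -/
abbrev A2Ring : Type := AddMonoidAlgebra ℤ (ℤ × ℤ)

/-- Simple reflection `s₁` of `A₂` (`α₁ = 2ω₁ - ω₂`): `s₁(v) = (-v₁, v₂+v₁)`. -/
def s1A2 (v : ℤ × ℤ) : ℤ × ℤ := (-v.1, v.2 + v.1)

/-- Simple reflection `s₂` of `A₂` (`α₂ = -ω₁ + 2ω₂`): `s₂(v) = (v₁+v₂, -v₂)`. -/
def s2A2 (v : ℤ × ℤ) : ℤ × ℤ := (v.1 + v.2, -v.2)

/-- The six elements of the Weyl group of `A₂`, paired with their lengths. -/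
def weylA2 : List ((ℤ × ℤ → ℤ × ℤ) × ℕ) :=
  [(id, 0), (s1A2, 1), (s2A2, 1), (s1A2 ∘ s2A2, 2), (s2A2 ∘ s1A2, 2),
   (s1A2 ∘ s2A2 ∘ s1A2, 3)]

/-- The Weyl vector `ρ = ω₁ + ω₂` of `A₂`. -/
def rhoA2 : ℤ × ℤ := (1, 1)

/-- The Weyl numerator `∑_{w ∈ W} (-1)^{ℓ(w)} e^{w(λ+ρ)}` of `A₂`. -/
noncomputable def weylNumerA2 (lam : ℤ × ℤ) : A2Ring :=
  (weylA2.map fun p => AddMonoidAlgebra.single (p.1 (lam + rhoA2)) ((-1 : ℤ) ^ p.2)).sum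

/-- The Weyl dimension polynomial of `A₂`: `D(λ₁,λ₂) = ½(1+λ₁)(1+λ₂)(2+λ₁+λ₂)`. -/
noncomputable def weylDimA2 (v : ℤ × ℤ) : ℚ :=
  (1/2) * (1 + (v.1 : ℚ)) * (1 + (v.2 : ℚ)) * (2 + (v.1 : ℚ) + v.2)

/-- The layer sum `∑_{μ ∈ P(λ)} e^μ` associated to a character `x`: the sum of formal
exponentials of the distinct weights appearing in `x`. -/
noncomputable def layerSum (x : A2Ring) : A2Ring :=
  ∑ μ ∈ x.coeff.support, AddMonoidAlgebra.single μ (1 : ℤ)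

namespace Stmt7Aux

open Finset

noncomputable def EE (v : ℤ × ℤ) : A2Ring := AddMonoidAlgebra.single v 1

lemma EE_mul (u v : ℤ × ℤ) : EE u * EE v = EE (u + v) := by
  simp [EE, AddMonoidAlgebra.single_mul_single]

lemma single_one_eq (v : ℤ × ℤ) : AddMonoidAlgebra.single v (1 : ℤ) = EE v := rfl

lemma single_negone_eq (v : ℤ × ℤ) : AddMonoidAlgebra.single v (-1 : ℤ) = -EE v := by
  rw [EE]; exact AddMonoidAlgebra.single_neg v 1

lemma EE_ne_zero (v : ℤ × ℤ) : EE v ≠ 0 := by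
  simpa [EE] using Finsupp.single_ne_zero.mpr (one_ne_zero (α := ℤ))

lemma EE_apply (v w : ℤ × ℤ) : (EE v : A2Ring).coeff w = if v = w then 1 else 0 := by
  simp [EE, Finsupp.single_apply]

lemma one_sub_EE_ne_zero (v : ℤ × ℤ) (hv : v ≠ 0) : (1 : A2Ring) - EE v ≠ 0 := by
  intro h
  have h0 : ((1 : A2Ring) - EE v).coeff 0 = 0 := by rw [h]; rfl
  rw [AddMonoidAlgebra.coeff_sub, Finsupp.sub_apply] at h0
  have h1 : ((1 : A2Ring)).coeff 0 = 1 := by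
    simp [AddMonoidAlgebra.one_def, Finsupp.single_apply]
  rw [h1, EE_apply, if_neg hv] at h0
  norm_num at h0

noncomputable def XX : A2Ring := EE (-2, 1)
noncomputable def YY : A2Ring := EE (1, -2)

lemma XX_pow (n : ℕ) : XX ^ n = EE (-2 * (n : ℤ), (n : ℤ)) := by
  rw [XX, EE, AddMonoidAlgebra.single_pow, one_pow]
  congr 1
  ext <;> simp <;> ring

lemma YY_pow (n : ℕ) : YY ^ n = EE ((n : ℤ), -2 * (n : ℤ)) := by
  rw [YY, EE, AddMonoidAlgebra.single_pow, one_pow]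
  congr 1
  ext <;> simp <;> ring

def NNpoly {R : Type*} [CommRing R] (u v : R) (s t : ℕ) : R :=
  1 - u ^ s - v ^ t + u ^ (s + t) * v ^ t + u ^ s * v ^ (s + t) - u ^ (s + t) * v ^ (s + t)

lemma numer_eq (a b : ℕ) :
    weylNumerA2 ((a : ℤ) - 1, (b : ℤ) - 1) = EE ((a : ℤ), (b : ℤ)) * NNpoly XX YY a b := by
  have h1 : ((a : ℤ) - 1, (b : ℤ) - 1) + rhoA2 = ((a : ℤ), (b : ℤ)) := by
    simp [rhoA2, Prod.ext_iff]
  rw [weylNumerA2, h1, weylA2]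
  simp only [List.map_cons, List.map_nil, List.sum_cons, List.sum_nil, add_zero,
    Function.comp_apply, id_eq, s1A2, s2A2, pow_zero, pow_one]
  norm_num
  rw [NNpoly]
  simp only [XX_pow, YY_pow, single_one_eq, single_negone_eq]
  push_cast
  simp only [mul_sub, mul_add, mul_one, EE_mul, Prod.mk_add_mk]
  ring_nf

lemma geom_one_sub {R : Type*} [CommRing R] (x : R) (n : ℕ) :
    (1 - x) * (∑ i ∈ Finset.range n, x ^ i) = 1 - x ^ n := by
  linear_combination -geom_sum_mul x n

lemma master {R : Type*} [CommRing R] (u v : R) (a b : ℕ) :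
    (1 - u) * (1 - v) * (1 - u * v) *
      ((∑ p ∈ range (a + 1), u ^ p * ∑ q ∈ range (p + b + 1), v ^ q)
        + ∑ p ∈ range b, u ^ (a + 1 + p) * ∑ j ∈ range (a + b - p), v ^ (p + 1 + j))
    = NNpoly u v (a + 1) (b + 1) - u * v * NNpoly u v a b := by
  have h1 : ∀ p : ℕ, (1 - v) * (u ^ p * ∑ q ∈ range (p + b + 1), v ^ q)
      = u ^ p - v ^ (b + 1) * (u * v) ^ p := by
    intro p
    have hg := geom_one_sub v (p + b + 1)
    calc (1 - v) * (u ^ p * ∑ q ∈ range (p + b + 1), v ^ q)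
        = u ^ p * ((1 - v) * ∑ q ∈ range (p + b + 1), v ^ q) := by ring
      _ = u ^ p * (1 - v ^ (p + b + 1)) := by rw [hg]
      _ = u ^ p - v ^ (b + 1) * (u * v) ^ p := by
          rw [show p + b + 1 = p + (b + 1) by omega, pow_add, mul_pow]; ring
  have h2 : ∀ p ∈ range b, (1 - v) * (u ^ (a + 1 + p) * ∑ j ∈ range (a + b - p), v ^ (p + 1 + j))
      = u ^ (a + 1) * v * (u * v) ^ p - u ^ (a + 1) * v ^ (a + b + 1) * u ^ p := by
    intro p hp
    have hpb : p < b := mem_range.mp hp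
    have hinner : ∑ j ∈ range (a + b - p), v ^ (p + 1 + j)
        = v ^ (p + 1) * ∑ j ∈ range (a + b - p), v ^ j := by
      rw [Finset.mul_sum]
      exact Finset.sum_congr rfl fun j _ => by rw [pow_add]
    have hg := geom_one_sub v (a + b - p)
    have hvp : v ^ (p + 1) * v ^ (a + b - p) = v ^ (a + b + 1) := by
      rw [← pow_add]; congr 1; omega
    calc (1 - v) * (u ^ (a + 1 + p) * ∑ j ∈ range (a + b - p), v ^ (p + 1 + j))
        = u ^ (a + 1 + p) * v ^ (p + 1) * ((1 - v) * ∑ j ∈ range (a + b - p), v ^ j) := by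
          rw [hinner]; ring
      _ = u ^ (a + 1 + p) * v ^ (p + 1) * (1 - v ^ (a + b - p)) := by rw [hg]
      _ = u ^ (a + 1 + p) * v ^ (p + 1) - u ^ (a + 1 + p) * (v ^ (p + 1) * v ^ (a + b - p)) := by
          ring
      _ = u ^ (a + 1) * v * (u * v) ^ p - u ^ (a + 1) * v ^ (a + b + 1) * u ^ p := by
          rw [hvp, pow_add, pow_add, mul_pow]; ring
  have hstep : (1 - v) *
      ((∑ p ∈ range (a + 1), u ^ p * ∑ q ∈ range (p + b + 1), v ^ q)
        + ∑ p ∈ range b, u ^ (a + 1 + p) * ∑ j ∈ range (a + b - p), v ^ (p + 1 + j))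
      = ((∑ p ∈ range (a + 1), u ^ p) - v ^ (b + 1) * ∑ p ∈ range (a + 1), (u * v) ^ p)
        + (u ^ (a + 1) * v * ∑ p ∈ range b, (u * v) ^ p
            - u ^ (a + 1) * v ^ (a + b + 1) * ∑ p ∈ range b, u ^ p) := by
    rw [mul_add, Finset.mul_sum, Finset.mul_sum,
      Finset.sum_congr rfl fun p _ => h1 p, Finset.sum_congr rfl h2,
      Finset.sum_sub_distrib, Finset.sum_sub_distrib, ← Finset.mul_sum, ← Finset.mul_sum,
      ← Finset.mul_sum]
  have g1 := geom_one_sub u (a + 1)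
  have g2 := geom_one_sub (u * v) (a + 1)
  have g3 := geom_one_sub (u * v) b
  have g4 := geom_one_sub u b
  calc (1 - u) * (1 - v) * (1 - u * v) *
      ((∑ p ∈ range (a + 1), u ^ p * ∑ q ∈ range (p + b + 1), v ^ q)
        + ∑ p ∈ range b, u ^ (a + 1 + p) * ∑ j ∈ range (a + b - p), v ^ (p + 1 + j))
      = (1 - u) * (1 - u * v) * ((1 - v) *
          ((∑ p ∈ range (a + 1), u ^ p * ∑ q ∈ range (p + b + 1), v ^ q)
            + ∑ p ∈ range b, u ^ (a + 1 + p) * ∑ j ∈ range (a + b - p), v ^ (p + 1 + j))) := by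
        ring
    _ = NNpoly u v (a + 1) (b + 1) - u * v * NNpoly u v a b := by
        rw [hstep]
        simp only [NNpoly]
        linear_combination (1 - u * v) * g1 - v ^ (b + 1) * (1 - u) * g2
          + u ^ (a + 1) * v * (1 - u) * g3 - u ^ (a + 1) * v ^ (a + b + 1) * (1 - u * v) * g4

def SsetA2 (a b : ℕ) : Finset (ℕ × ℕ) :=
  (Finset.range (a + b + 1) ×ˢ Finset.range (a + b + 1)).filter
    (fun z => z.1 ≤ a + z.2 ∧ z.2 ≤ b + z.1)

lemma mem_Sset {a b : ℕ} {z : ℕ × ℕ} :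
    z ∈ SsetA2 a b ↔ z.1 ≤ a + b ∧ z.2 ≤ a + b ∧ z.1 ≤ a + z.2 ∧ z.2 ≤ b + z.1 := by
  simp only [SsetA2, Finset.mem_filter, Finset.mem_product, Finset.mem_range]
  omega

lemma sum_Sset {R : Type*} [CommRing R] (u v : R) (a b : ℕ) :
    ∑ z ∈ SsetA2 a b, u ^ z.1 * v ^ z.2
      = (∑ p ∈ range (a + 1), u ^ p * ∑ q ∈ range (p + b + 1), v ^ q)
        + ∑ p ∈ range b, u ^ (a + 1 + p) * ∑ j ∈ range (a + b - p), v ^ (p + 1 + j) := by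
  rw [SsetA2, Finset.sum_filter, Finset.sum_product]
  rw [← Finset.sum_range_add_sum_Ico _ (show a + 1 ≤ a + b + 1 by omega)]
  congr 1
  · refine Finset.sum_congr rfl fun p hp => ?_
    have hpa : p ≤ a := by have := Finset.mem_range.mp hp; omega
    have hfilter : (Finset.range (a + b + 1)).filter
        (fun q => (p, q).1 ≤ a + (p, q).2 ∧ (p, q).2 ≤ b + (p, q).1)
        = Finset.range (p + b + 1) := by
      ext q
      simp only [Finset.mem_filter, Finset.mem_range]
      omega
    rw [← Finset.sum_filter, hfilter, Finset.mul_sum]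
  · rw [Finset.sum_Ico_eq_sum_range, show a + b + 1 - (a + 1) = b by omega]
    refine Finset.sum_congr rfl fun p hp => ?_
    have hpb : p < b := Finset.mem_range.mp hp
    have hfilter : (Finset.range (a + b + 1)).filter
        (fun q => (a + 1 + p, q).1 ≤ a + (a + 1 + p, q).2 ∧ (a + 1 + p, q).2 ≤ b + (a + 1 + p, q).1)
        = Finset.Ico (p + 1) (a + b + 1) := by
      ext q
      simp only [Finset.mem_filter, Finset.mem_range, Finset.mem_Ico]
      omega
    rw [← Finset.sum_filter, hfilter,
      Finset.sum_Ico_eq_sum_range, show a + b + 1 - (p + 1) = a + b - p by omega,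
      Finset.mul_sum]

/-- The weight attached to the lattice point `(p,q)`: `λ - p α₁ - q α₂`. -/
def muA2 (a b : ℕ) (z : ℕ × ℕ) : ℤ × ℤ :=
  ((a : ℤ) - 2 * z.1 + z.2, (b : ℤ) + z.1 - 2 * z.2)

lemma mu_inj (a b : ℕ) {z w : ℕ × ℕ} (h : muA2 a b z = muA2 a b w) : z = w := by
  obtain ⟨p, q⟩ := z; obtain ⟨p', q'⟩ := w
  simp only [muA2, Prod.mk.injEq] at h ⊢
  omega

def PsetA2 (a b : ℕ) : Finset (ℤ × ℤ) := (SsetA2 a b).image (muA2 a b)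

noncomputable def Lcand (a b : ℕ) : A2Ring := ∑ ν ∈ PsetA2 a b, EE ν

lemma Lcand_eq_sum (a b : ℕ) : Lcand a b = ∑ z ∈ SsetA2 a b, EE (muA2 a b z) := by
  rw [Lcand, PsetA2]
  exact Finset.sum_image fun x _ y _ h => mu_inj a b h

lemma EE_mu (a b : ℕ) (z : ℕ × ℕ) :
    EE (muA2 a b z) = EE ((a : ℤ), (b : ℤ)) * (XX ^ z.1 * YY ^ z.2) := by
  rw [XX_pow, YY_pow, EE_mul, EE_mul]
  congr 1
  simp only [muA2, Prod.mk_add_mk, Prod.mk.injEq]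
  constructor <;> ring

/-- Key identity: `d · 𝓛cand = numer(λ) - numer(λ - (1,1))`. -/
lemma key (a b : ℕ) :
    weylNumerA2 0 * Lcand a b
      = weylNumerA2 ((a : ℤ), (b : ℤ)) - EE ((a : ℤ), (b : ℤ)) * NNpoly XX YY a b := by
  have hd : weylNumerA2 0 = EE (1, 1) * NNpoly XX YY 1 1 := by
    have h := numer_eq 1 1
    norm_num at h
    convert h using 2
    rfl
  have hfac : NNpoly XX YY 1 1 = (1 - XX) * (1 - YY) * (1 - XX * YY) := by
    simp only [NNpoly]; ring
  have hnum : weylNumerA2 ((a : ℤ), (b : ℤ))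
      = EE ((a : ℤ) + 1, (b : ℤ) + 1) * NNpoly XX YY (a + 1) (b + 1) := by
    have h := numer_eq (a + 1) (b + 1)
    push_cast at h
    simpa using h
  have hL : Lcand a b = EE ((a : ℤ), (b : ℤ)) * ∑ z ∈ SsetA2 a b, XX ^ z.1 * YY ^ z.2 := by
    rw [Lcand_eq_sum, Finset.mul_sum]
    exact Finset.sum_congr rfl fun z _ => EE_mu a b z
  have hEE1 : EE (1, 1) * EE ((a : ℤ), (b : ℤ)) = EE ((a : ℤ) + 1, (b : ℤ) + 1) := by
    rw [EE_mul]; congr 1; simp [Prod.ext_iff]; constructor <;> ring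
  have hEE2 : EE (1, 1) * EE ((a : ℤ), (b : ℤ)) * (XX * YY) = EE ((a : ℤ), (b : ℤ)) := by
    rw [XX, YY, EE_mul, EE_mul, EE_mul]; congr 1; simp [Prod.ext_iff]
  calc weylNumerA2 0 * Lcand a b
      = EE (1, 1) * EE ((a : ℤ), (b : ℤ)) *
          ((1 - XX) * (1 - YY) * (1 - XX * YY) * ∑ z ∈ SsetA2 a b, XX ^ z.1 * YY ^ z.2) := by
        rw [hd, hfac, hL]; ring
    _ = EE (1, 1) * EE ((a : ℤ), (b : ℤ)) *
          (NNpoly XX YY (a + 1) (b + 1) - XX * YY * NNpoly XX YY a b) := by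
        rw [sum_Sset XX YY a b, master XX YY a b]
    _ = (EE (1, 1) * EE ((a : ℤ), (b : ℤ))) * NNpoly XX YY (a + 1) (b + 1)
          - (EE (1, 1) * EE ((a : ℤ), (b : ℤ)) * (XX * YY)) * NNpoly XX YY a b := by
        ring
    _ = weylNumerA2 ((a : ℤ), (b : ℤ)) - EE ((a : ℤ), (b : ℤ)) * NNpoly XX YY a b := by
        rw [hEE2, hEE1, hnum]

lemma denom_ne_zero : weylNumerA2 0 ≠ 0 := by
  have hd : weylNumerA2 0 = EE (1, 1) * NNpoly XX YY 1 1 := by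
    have h := numer_eq 1 1
    norm_num at h
    convert h using 2
    rfl
  have hfac : NNpoly XX YY 1 1 = (1 - XX) * (1 - YY) * (1 - XX * YY) := by
    simp only [NNpoly]; ring
  rw [hd, hfac]
  have hXY : XX * YY = EE (-1, -1) := by rw [XX, YY, EE_mul]; rfl
  refine mul_ne_zero (EE_ne_zero _) (mul_ne_zero (mul_ne_zero ?_ ?_) ?_)
  · rw [XX]; exact one_sub_EE_ne_zero _ (by simp [Prod.ext_iff])
  · rw [YY]; exact one_sub_EE_ne_zero _ (by simp [Prod.ext_iff])
  · rw [hXY]; exact one_sub_EE_ne_zero _ (by simp [Prod.ext_iff])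

end Stmt7Aux

namespace Stmt7Aux

open Finset

section Chars

variable (ch : ℤ × ℤ → A2Ring)
variable (hch : ∀ lam : ℤ × ℤ, 0 ≤ lam.1 → 0 ≤ lam.2 →
  weylNumerA2 0 * ch lam = weylNumerA2 lam)

include hch

lemma step0 (a b : ℕ) (h : a = 0 ∨ b = 0) : ch ((a : ℤ), (b : ℤ)) = Lcand a b := by
  have hzero : NNpoly XX YY a b = 0 := by
    rcases h with rfl | rfl <;> · simp only [NNpoly, pow_zero, zero_add, add_zero]; ring
  apply mul_left_cancel₀ denom_ne_zero
  rw [hch _ (by simp) (by simp), key a b, hzero, mul_zero, sub_zero]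

lemma step1 (a b : ℕ) :
    ch ((a : ℤ) + 1, (b : ℤ) + 1) = Lcand (a + 1) (b + 1) + ch ((a : ℤ), (b : ℤ)) := by
  apply mul_left_cancel₀ denom_ne_zero
  have hk := key (a + 1) (b + 1)
  have hn := numer_eq (a + 1) (b + 1)
  push_cast at hk hn
  norm_num at hn
  rw [mul_add, hk, hch ((a : ℤ) + 1, (b : ℤ) + 1) (by simp; positivity) (by simp; positivity),
    hch ((a : ℤ), (b : ℤ)) (by simp) (by simp), ← hn]
  ring

lemma chain : ∀ n a b : ℕ, min a b = n →
    ch ((a : ℤ), (b : ℤ)) = ∑ k ∈ range (n + 1), Lcand (a - k) (b - k) := by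
  intro n
  induction n with
  | zero =>
    intro a b hmin
    rw [Finset.sum_range_one]
    simpa using step0 ch hch a b (by omega)
  | succ n ih =>
    intro a b hmin
    obtain ⟨a', rfl⟩ : ∃ a', a = a' + 1 := ⟨a - 1, by omega⟩
    obtain ⟨b', rfl⟩ : ∃ b', b = b' + 1 := ⟨b - 1, by omega⟩
    have hcast : ((((a' + 1 : ℕ) : ℤ), ((b' + 1 : ℕ) : ℤ)) : ℤ × ℤ)
        = ((a' : ℤ) + 1, (b' : ℤ) + 1) := by push_cast; rfl
    rw [hcast, step1 ch hch a' b', ih a' b' (by omega),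
      Finset.sum_range_succ' (fun k => Lcand (a' + 1 - k) (b' + 1 - k)) (n + 1)]
    simp only [Nat.add_sub_add_right, Nat.sub_zero]
    ring

omit hch

lemma Lcand_apply (a b : ℕ) (ν : ℤ × ℤ) :
    (Lcand a b).coeff ν = if ν ∈ PsetA2 a b then 1 else 0 := by
  rw [Lcand, AddMonoidAlgebra.coeff_sum, Finsupp.finset_sum_apply]
  simp only [EE_apply]
  exact Finset.sum_ite_eq' _ _ _

lemma Pset_mono (a b k : ℕ) (hka : k ≤ a) (hkb : k ≤ b) :
    PsetA2 (a - k) (b - k) ⊆ PsetA2 a b := by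
  intro ν hν
  simp only [PsetA2, Finset.mem_image] at hν ⊢
  obtain ⟨z, hz, rfl⟩ := hν
  refine ⟨(z.1 + k, z.2 + k), ?_, ?_⟩
  · simp only [mem_Sset] at hz ⊢
    omega
  · simp only [muA2, Prod.mk.injEq]
    rw [Nat.cast_sub hka, Nat.cast_sub hkb]
    push_cast
    constructor <;> ring

include hch

lemma support_ch (a b : ℕ) : (ch ((a : ℤ), (b : ℤ))).coeff.support = PsetA2 a b := by
  have hc := chain ch hch (min a b) a b rfl
  ext ν
  rw [Finsupp.mem_support_iff, hc, AddMonoidAlgebra.coeff_sum, Finsupp.finset_sum_apply]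
  simp only [Lcand_apply]
  by_cases hν : ν ∈ PsetA2 a b
  · simp only [hν, iff_true]
    have pos : 0 < ∑ k ∈ range (min a b + 1),
        (if ν ∈ PsetA2 (a - k) (b - k) then (1 : ℤ) else 0) := by
      refine Finset.sum_pos' (fun i _ => by split <;> norm_num)
        ⟨0, Finset.mem_range.mpr (Nat.succ_pos _), ?_⟩
      simp [hν]
    exact pos.ne'
  · simp only [hν, iff_false, ne_eq, not_not]
    refine Finset.sum_eq_zero fun k hk => ?_
    rw [if_neg]
    intro hmem
    have hk' : k ≤ min a b := by have := Finset.mem_range.mp hk; omega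
    exact hν (Pset_mono a b k (by omega) (by omega) hmem)

end Chars

end Stmt7Aux

/-- for `A₂ = 𝔰𝔩₃`, with `ch` the irreducible characters (Weyl character
formula, hypothesis `hch`) and `chA` their auxiliary extension
(`ch_{w·μ} := (-1)^{ℓ(w)} ch_μ` for dominant `μ`, hypothesis `haux`; `ch_ν := 0` when
`ν + ρ` lies on a wall, i.e. `D(ν) = 0`, hypothesis `hwall`), the layer sum of any
dominant integral weight `λ` satisfies `𝓛_λ = ch_λ - ch_{λ - α₁ - α₂}`;
in fundamental-weight coordinates `α₁ + α₂ = (1,1)`. -/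
theorem stmt_7 (ch chA : ℤ × ℤ → A2Ring)
    (hch : ∀ lam : ℤ × ℤ, 0 ≤ lam.1 → 0 ≤ lam.2 →
      weylNumerA2 0 * ch lam = weylNumerA2 lam)
    (haux : ∀ lam : ℤ × ℤ, 0 ≤ lam.1 → 0 ≤ lam.2 → ∀ p ∈ weylA2,
      chA (p.1 (lam + rhoA2) - rhoA2) = ((-1 : ℤ) ^ p.2) • ch lam)
    (hwall : ∀ ν : ℤ × ℤ, weylDimA2 ν = 0 → chA ν = 0) :
    ∀ lam : ℤ × ℤ, 0 ≤ lam.1 → 0 ≤ lam.2 →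
      layerSum (ch lam) = chA lam - chA (lam - (1, 1)) := by
  intro lam h1 h2
  obtain ⟨x, y⟩ := lam
  simp only at h1 h2
  lift x to ℕ using h1 with a
  lift y to ℕ using h2 with b
  have hA : chA ((a : ℤ), (b : ℤ)) = ch ((a : ℤ), (b : ℤ)) := by
    have h := haux ((a : ℤ), (b : ℤ)) (by simp) (by simp) (id, 0) (by simp [weylA2])
    simpa using h
  have hlayer : layerSum (ch ((a : ℤ), (b : ℤ))) = Stmt7Aux.Lcand a b := by
    rw [layerSum, Stmt7Aux.support_ch ch hch a b, Stmt7Aux.Lcand]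
    rfl
  by_cases hab : a = 0 ∨ b = 0
  · have hdim : weylDimA2 ((((a : ℤ), (b : ℤ)) : ℤ × ℤ) - (1, 1)) = 0 := by
      rcases hab with rfl | rfl <;>
        · simp only [weylDimA2, Prod.fst_sub, Prod.snd_sub]
          push_cast
          ring
    rw [hA, hwall _ hdim, sub_zero, hlayer, Stmt7Aux.step0 ch hch a b hab]
  · push_neg at hab
    obtain ⟨a', rfl⟩ : ∃ a', a = a' + 1 := ⟨a - 1, by omega⟩
    obtain ⟨b', rfl⟩ : ∃ b', b = b' + 1 := ⟨b - 1, by omega⟩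
    have hsub : (((((a' + 1 : ℕ)) : ℤ), (((b' + 1 : ℕ)) : ℤ)) : ℤ × ℤ) - (1, 1)
        = ((a' : ℤ), (b' : ℤ)) := by
      simp only [Prod.ext_iff, Prod.fst_sub, Prod.snd_sub]
      push_cast
      constructor <;> ring
    have hA' : chA ((((((a' + 1 : ℕ)) : ℤ), (((b' + 1 : ℕ)) : ℤ)) : ℤ × ℤ) - (1, 1))
        = ch ((a' : ℤ), (b' : ℤ)) := by
      rw [hsub]
      have h := haux ((a' : ℤ), (b' : ℤ)) (by simp) (by simp) (id, 0) (by simp [weylA2])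
      simpa using h
    rw [hA, hA', hlayer]
    have hcast : ((((a' + 1 : ℕ) : ℤ), ((b' + 1 : ℕ) : ℤ)) : ℤ × ℤ)
        = ((a' : ℤ) + 1, (b' : ℤ) + 1) := by push_cast; rfl
    rw [hcast, Stmt7Aux.step1 ch hch a' b']
    ring
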